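/- The logarithmic energy of the N-th roots of unity in the complex plane, defined as the sum over all ordered pairs of distinct roots of −log of their distance, equals −N log N. -/

import Mathlib

open Real Complex

lemma row_prod (n : ℕ) (ζ : ℂ) (hζ : IsPrimitiveRoot ζ (n + 1)) (i : ℕ) (hi : i < n + 1) :
    ∏ j ∈ (Finset.range (n + 1)).erase i, ‖ζ ^ i - ζ ^ j‖ = (n : ℝ) + 1 := by
  set N := n + 1 with hNdef
  have hN0 : 0 < N := Nat.succ_pos n
  have habs : ‖ζ‖ = 1 := by
    simpa using
      Complex.norm_eq_one_of_pow_eq_one hζ.pow_eq_one (by omega)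
  have horder : orderOf ζ = N := hζ.eq_orderOf.symm
  have hm : ∀ j ∈ (Finset.range N).erase i,
      ζ ^ (i + (j + (N - i)) % N) = ζ ^ j ∧ 1 ≤ (j + (N - i)) % N := by
    intro j hjmem
    obtain ⟨hne, hjlt⟩ := Finset.mem_erase.mp hjmem
    rw [Finset.mem_range] at hjlt
    have e : (i + (j + (N - i)) % N) % N = j % N := by
      rw [Nat.add_mod_mod, show i + (j + (N - i)) = j + N by omega, Nat.add_mod_right]
    have hpow : ζ ^ (i + (j + (N - i)) % N) = ζ ^ j := by
      conv_lhs => rw [← pow_mod_orderOf]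
      conv_rhs => rw [← pow_mod_orderOf]
      rw [horder, e]
    refine ⟨hpow, ?_⟩
    by_contra h
    have h0 : (j + (N - i)) % N = 0 := by omega
    rw [h0, Nat.add_zero] at hpow
    exact hne (hζ.pow_inj hjlt hi hpow.symm)
  have key : ∏ j ∈ (Finset.range N).erase i, ‖ζ ^ i - ζ ^ j‖
      = ∏ k ∈ Finset.range n, ‖1 - ζ ^ (k + 1)‖ := by
    refine Finset.prod_nbij' (fun j => (j + (N - i)) % N - 1) (fun k => (k + 1 + i) % N)
      ?_ ?_ ?_ ?_ ?_
    · intro j hj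
      obtain ⟨hpow, h1⟩ := hm j hj
      have h2 : (j + (N - i)) % N < N := Nat.mod_lt _ hN0
      rw [Finset.mem_range]; omega
    · intro k hk
      rw [Finset.mem_range] at hk
      rw [Finset.mem_erase, Finset.mem_range]
      refine ⟨?_, Nat.mod_lt _ hN0⟩
      intro hc
      have hd := Nat.div_add_mod (k + 1 + i) N
      rw [hc] at hd
      have heq : N * ((k + 1 + i) / N) = k + 1 := by omega
      rcases Nat.eq_zero_or_pos ((k + 1 + i) / N) with h0 | h0
      · rw [h0] at heq; omega
      · have : N ≤ N * ((k + 1 + i) / N) := Nat.le_mul_of_pos_right N h0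
        omega
    · intro j hj
      obtain ⟨hpow, h1⟩ := hm j hj
      obtain ⟨hne, hjlt⟩ := Finset.mem_erase.mp hj
      rw [Finset.mem_range] at hjlt
      rw [Nat.sub_add_cancel h1, Nat.mod_add_mod,
        show j + (N - i) + i = j + N by omega, Nat.add_mod_right, Nat.mod_eq_of_lt hjlt]
    · intro k hk
      rw [Finset.mem_range] at hk
      rw [Nat.mod_add_mod, show k + 1 + i + (N - i) = k + 1 + N by omega,
        Nat.add_mod_right, Nat.mod_eq_of_lt (show k + 1 < N by omega)]
      omega
    · intro j hj
      obtain ⟨hpow, h1⟩ := hm j hj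
      rw [Nat.sub_add_cancel h1, ← hpow, pow_add, show ζ ^ i - ζ ^ i * ζ ^ ((j + (N - i)) % N)
        = ζ ^ i * (1 - ζ ^ ((j + (N - i)) % N)) by ring, norm_mul, norm_pow, habs, one_pow, one_mul]
  rw [key, ← norm_prod, hζ.prod_one_sub_pow_eq_order,
    show ((n : ℂ) + 1) = (((n + 1 : ℕ) : ℂ)) by push_cast; ring, Complex.norm_natCast]
  push_cast; ring

theorem stmt3 (N : ℕ) (hN : 1 ≤ N) :
    ∑ i ∈ Finset.range N, ∑ j ∈ Finset.range N,
      (if i ≠ j then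
        Real.log (‖Complex.exp (2 * Real.pi * Complex.I * i / N) -
          Complex.exp (2 * Real.pi * Complex.I * j / N)‖)⁻¹ else 0)
      = -(N : ℝ) * Real.log N := by
  obtain ⟨n, rfl⟩ : ∃ n, N = n + 1 := ⟨N - 1, by omega⟩
  set ζ : ℂ := Complex.exp (2 * Real.pi * Complex.I / (n + 1 : ℕ)) with hζdef
  have hζ : IsPrimitiveRoot ζ (n + 1) := Complex.isPrimitiveRoot_exp _ (by omega)
  have hexp : ∀ k : ℕ, Complex.exp (2 * Real.pi * Complex.I * k / (n + 1 : ℕ)) = ζ ^ k := by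
    intro k
    rw [hζdef, ← Complex.exp_nat_mul]
    congr 1
    ring
  simp only [hexp]
  have inner : ∀ i ∈ Finset.range (n + 1),
      (∑ j ∈ Finset.range (n + 1), if i ≠ j then Real.log (‖ζ ^ i - ζ ^ j‖)⁻¹ else 0)
        = -Real.log ((n : ℝ) + 1) := by
    intro i hi
    rw [Finset.mem_range] at hi
    rw [← Finset.sum_filter, Finset.filter_ne]
    have hne0 : ∀ j ∈ (Finset.range (n + 1)).erase i, ‖ζ ^ i - ζ ^ j‖ ≠ 0 := by
      intro j hj
      obtain ⟨hne, hjlt⟩ := Finset.mem_erase.mp hj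
      rw [Finset.mem_range] at hjlt
      intro h
      have heq : ζ ^ i = ζ ^ j := by
        have := norm_eq_zero.mp h
        linear_combination this
      exact hne (hζ.pow_inj hjlt hi heq.symm)
    simp only [Real.log_inv]
    rw [Finset.sum_neg_distrib, ← Real.log_prod hne0, row_prod n ζ hζ i hi]
  rw [Finset.sum_congr rfl inner, Finset.sum_const, Finset.card_range, nsmul_eq_mul]
  push_cast
  ring
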